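/- Let (c_n)_{n≥1} ∈ s. Then for each n ≥ 1 the equation (1 + 1/(n²+1))·x + (1/n!)·tanh(x) = c_n has a unique real solution x_n*, and the resulting sequence (x_n*)_{n≥1} belongs to s. -/
import Mathlib


/-- The space `s` of rapidly decreasing sequences (indexed so that `x n` represents the
`(n+1)`-st term of the paper's sequence `(x_n)_{n ≥ 1}`). -/
def InS (x : ℕ → ℝ) : Prop :=
  ∀ k : ℕ, ∃ C : ℝ, ∀ n : ℕ, |x n| * ((n : ℝ) + 1) ^ k ≤ C

private lemma tanh_strictMono : StrictMono Real.tanh := by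
  intro x y hxy
  rw [Real.tanh_eq_sinh_div_cosh, Real.tanh_eq_sinh_div_cosh,
    div_lt_div_iff₀ (Real.cosh_pos x) (Real.cosh_pos y)]
  have h : 0 < Real.sinh (y - x) := Real.sinh_pos_iff.2 (by linarith)
  rw [Real.sinh_sub] at h
  nlinarith

private lemma abs_tanh_le_one (x : ℝ) : |Real.tanh x| ≤ 1 := by
  rw [Real.tanh_eq_sinh_div_cosh, abs_div, abs_of_pos (Real.cosh_pos x),
    div_le_one (Real.cosh_pos x)]
  have h := Real.cosh_sq' x
  nlinarith [abs_nonneg (Real.sinh x), sq_abs (Real.sinh x), Real.cosh_pos x,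
    abs_nonneg (Real.sinh x)]

private lemma tanh_nonneg {x : ℝ} (hx : 0 ≤ x) : 0 ≤ Real.tanh x := by
  rcases eq_or_lt_of_le hx with h | h
  · simp [← h, Real.tanh_zero]
  · have := tanh_strictMono h
    simpa [Real.tanh_zero] using this.le

private lemma tanh_nonpos {x : ℝ} (hx : x ≤ 0) : Real.tanh x ≤ 0 := by
  rcases eq_or_lt_of_le hx with h | h
  · simp [h, Real.tanh_zero]
  · have := tanh_strictMono h
    simpa [Real.tanh_zero] using this.le

private lemma continuous_tanh : Continuous Real.tanh := by
  have : Real.tanh = fun x => Real.sinh x / Real.cosh x := by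
    funext x; exact Real.tanh_eq_sinh_div_cosh x
  rw [this]
  exact Real.continuous_sinh.div Real.continuous_cosh fun x => (Real.cosh_pos x).ne'

/-- Main solvability lemma. -/
private lemma solve (a b c : ℝ) (ha : 1 ≤ a) (hb : 0 < b) :
    ∃ x : ℝ, |x| ≤ |c| ∧ a * x + b * Real.tanh x = c ∧
      ∀ y : ℝ, a * y + b * Real.tanh y = c → y = x := by
  set f : ℝ → ℝ := fun x => a * x + b * Real.tanh x with hf
  have hmono : StrictMono f := by
    intro u v huv
    have h1 : a * u < a * v := by nlinarith
    have h2 : b * Real.tanh u < b * Real.tanh v :=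
      mul_lt_mul_of_pos_left (tanh_strictMono huv) hb
    simpa [hf] using add_lt_add h1 h2
  have hcont : Continuous f := by
    exact (continuous_const.mul continuous_id).add (continuous_const.mul continuous_tanh)
  -- IVT on [-M, M] where M = |c| + b
  set M : ℝ := |c| + b with hM
  have hM0 : 0 ≤ M := by positivity
  have hfM : c ≤ f M := by
    have h1 : 0 ≤ Real.tanh M := tanh_nonneg hM0
    have h2 : |Real.tanh M| ≤ 1 := abs_tanh_le_one M
    have hca : |c| ≤ c + 2 * |c| := by cases abs_cases c <;> nlinarith [abs_nonneg c]
    have : f M = a * (|c| + b) + b * Real.tanh M := rfl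
    nlinarith [abs_nonneg c, le_abs_self c]
  have hfmM : f (-M) ≤ c := by
    have h1 : Real.tanh (-M) ≤ 0 := tanh_nonpos (by linarith)
    have h2 : |Real.tanh (-M)| ≤ 1 := abs_tanh_le_one (-M)
    have h2' : -1 ≤ Real.tanh (-M) := (abs_le.1 h2).1
    have : f (-M) = a * (-(|c| + b)) + b * Real.tanh (-M) := rfl
    nlinarith [abs_nonneg c, neg_abs_le c]
  have hIcc : Set.Icc (f (-M)) (f M) ⊆ f '' Set.Icc (-M) M :=
    intermediate_value_Icc (by linarith) hcont.continuousOn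
  obtain ⟨x, hx, hfx⟩ := hIcc ⟨hfmM, hfM⟩
  refine ⟨x, ?_, hfx, fun y hy => hmono.injective (by rw [hfx]; exact hy)⟩
  -- |x| ≤ |c|
  rcases le_or_gt 0 x with hx0 | hx0
  · have h1 : 0 ≤ Real.tanh x := tanh_nonneg hx0
    have : a * x + b * Real.tanh x = c := hfx
    have hxc : x ≤ c := by nlinarith
    rw [abs_of_nonneg hx0]
    exact hxc.trans (le_abs_self c)
  · have h1 : Real.tanh x ≤ 0 := tanh_nonpos hx0.le
    have : a * x + b * Real.tanh x = c := hfx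
    have hcx : c ≤ x := by nlinarith
    rw [abs_of_neg hx0]
    cases abs_cases c <;> nlinarith

/-- for `(c_n) ∈ s`, for each `n ≥ 1` the equation
`(1 + 1/(n² + 1)) x + (1/n!) tanh x = c_n` has a unique real solution `x_n*`, and the
sequence `(x_n*)` belongs to `s`. (Here index `n : ℕ` stands for the paper's `n + 1`.) -/
theorem stmt_16 (c : ℕ → ℝ) (hc : InS c) :
    ∃ x : ℕ → ℝ, InS x ∧ ∀ n : ℕ,
      ((1 + 1 / (((n : ℝ) + 1) ^ 2 + 1)) * x n
          + (1 / (Nat.factorial (n + 1) : ℝ)) * Real.tanh (x n) = c n) ∧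
      (∀ y : ℝ, (1 + 1 / (((n : ℝ) + 1) ^ 2 + 1)) * y
          + (1 / (Nat.factorial (n + 1) : ℝ)) * Real.tanh y = c n → y = x n) := by
  have key : ∀ n : ℕ, ∃ x : ℝ, |x| ≤ |c n| ∧
      (1 + 1 / (((n : ℝ) + 1) ^ 2 + 1)) * x
          + (1 / (Nat.factorial (n + 1) : ℝ)) * Real.tanh x = c n ∧
      ∀ y : ℝ, (1 + 1 / (((n : ℝ) + 1) ^ 2 + 1)) * y
          + (1 / (Nat.factorial (n + 1) : ℝ)) * Real.tanh y = c n → y = x := by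
    intro n
    apply solve
    · have : (0:ℝ) < ((n : ℝ) + 1) ^ 2 + 1 := by positivity
      have := div_pos one_pos this
      linarith
    · have : (0:ℝ) < (Nat.factorial (n + 1) : ℝ) := by
        exact_mod_cast Nat.factorial_pos (n + 1)
      positivity
  choose x hxle hxeq hxuniq using key
  refine ⟨x, ?_, fun n => ⟨hxeq n, hxuniq n⟩⟩
  intro k
  obtain ⟨C, hC⟩ := hc k
  exact ⟨C, fun n => le_trans (by
    have : (0:ℝ) ≤ ((n:ℝ) + 1) ^ k := by positivity
    exact mul_le_mul_of_nonneg_right (hxle n) this) (hC n)⟩
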